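/- Let A ⊆ ℝ^d be a nonempty set and r > 0. Every point z of the positive boundary ∂⁺A_r of the open r-parallel set A_r has a unique nearest point in A, i.e., ∂⁺A_r ⊆ Unp(A). -/

import Mathlib

open Set Metric

variable {d : ℕ}

/-- The open `r`-parallel set of `A`. -/
def parSet (A : Set (EuclideanSpace ℝ (Fin d))) (r : ℝ) : Set (EuclideanSpace ℝ (Fin d)) :=
  {x | Metric.infDist x A < r}

/-- The positive boundary of `Z`: boundary points `z` for which some `y ∉ closure Z`
satisfies `|y - z| = dist(y, Z)`. -/
def posBoundary (Z : Set (EuclideanSpace ℝ (Fin d))) : Set (EuclideanSpace ℝ (Fin d)) :=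
  {z | z ∈ frontier Z ∧ ∃ y, y ∉ closure Z ∧ dist y z = Metric.infDist y Z}

/-- `Unp A`: points having a unique nearest point in the closure of `A`. -/
def Unp (A : Set (EuclideanSpace ℝ (Fin d))) : Set (EuclideanSpace ℝ (Fin d)) :=
  {x | ∃! a, a ∈ closure A ∧ dist x a = Metric.infDist x A}

/-- Segment argument: if `a ∈ A` and `dist y a ≥ r`, then the distance from `y` to the
parallel set is at most `dist y a - r`, via points on the segment from `a` towards `y`. -/
lemma key_ineq (A : Set (EuclideanSpace ℝ (Fin d))) {r : ℝ} (hr : 0 < r)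
    {y a : EuclideanSpace ℝ (Fin d)} (ha : a ∈ A) (hya : r ≤ dist y a) :
    Metric.infDist y (parSet A r) ≤ dist y a - r := by
  refine le_of_forall_pos_le_add fun ε hε => ?_
  rcases le_or_gt r ε with h | h
  · have : Metric.infDist y (parSet A r) ≤ dist y a := by
      refine Metric.infDist_le_dist_of_mem ?_
      show Metric.infDist a A < r
      simp [Metric.infDist_zero_of_mem ha, hr]
    linarith
  · have hD : (0:ℝ) < dist y a := lt_of_lt_of_le hr hya
    set t : ℝ := (r - ε) / dist y a with ht
    have ht0 : 0 ≤ t := div_nonneg (by linarith) hD.le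
    have ht1 : t ≤ 1 := by
      rw [div_le_one hD]; linarith
    set p : EuclideanSpace ℝ (Fin d) := a + t • (y - a) with hp
    have hpa : dist p a = r - ε := by
      rw [dist_eq_norm]
      simp only [hp, add_sub_cancel_left, norm_smul, Real.norm_eq_abs, abs_of_nonneg ht0]
      rw [ht]
      field_simp
      rw [← dist_eq_norm y a] at *
    have hyp : dist y p = dist y a - (r - ε) := by
      have : y - p = (1 - t) • (y - a) := by
        simp only [hp]; module
      rw [dist_eq_norm, this, norm_smul, Real.norm_eq_abs, abs_of_nonneg (by linarith),
        ← dist_eq_norm, ht]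
      field_simp
    have hpA : p ∈ parSet A r := by
      show Metric.infDist p A < r
      calc Metric.infDist p A ≤ dist p a := Metric.infDist_le_dist_of_mem ha
        _ = r - ε := hpa
        _ < r := by linarith
    calc Metric.infDist y (parSet A r) ≤ dist y p := Metric.infDist_le_dist_of_mem hpA
      _ = dist y a - r + ε := by rw [hyp]; ring

/-- Every point of the positive boundary of the open `r`-parallel set of a nonempty set `A`
has a unique nearest point in `A`. -/
theorem stmt2 (A : Set (EuclideanSpace ℝ (Fin d))) (hA : A.Nonempty) (r : ℝ) (hr : 0 < r) :
    posBoundary (parSet A r) ⊆ Unp A := by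
  intro z hz
  obtain ⟨hzf, y, hyc, hyd⟩ := hz
  have hAr_open : IsOpen (parSet A r) :=
    isOpen_lt (continuous_infDist_pt A) continuous_const
  have hzcl : z ∈ closure (parSet A r) := hzf.1
  have hznot : z ∉ parSet A r := by
    rw [hAr_open.frontier_eq] at hzf; exact hzf.2
  -- infDist z A = r
  have hzA : Metric.infDist z A = r := by
    refine le_antisymm ?_ (not_lt.mp hznot)
    have : closure (parSet A r) ⊆ {x | Metric.infDist x A ≤ r} :=
      closure_minimal (fun x hx => le_of_lt (show Metric.infDist x A < r from hx))
        (isClosed_le (continuous_infDist_pt A) continuous_const)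
    exact this hzcl
  set s : ℝ := dist y z with hsdef
  have hs0 : 0 < s := by
    rw [hsdef, dist_pos]
    rintro rfl; exact hyc hzcl
  have hyAr : r ≤ Metric.infDist y A := by
    by_contra h
    exact hyc (subset_closure (not_le.mp h))
  -- key: s + r ≤ infDist y A
  have hkey : ∀ a ∈ A, s + r ≤ dist y a := by
    intro a ha
    have h1 : r ≤ dist y a := le_trans hyAr (Metric.infDist_le_dist_of_mem ha)
    have h2 := key_ineq A hr ha h1
    rw [← hyd] at h2
    linarith
  have hinf : s + r ≤ Metric.infDist y A := by
    by_contra h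
    obtain ⟨a, ha, hlt⟩ := (Metric.infDist_lt_iff hA).mp (not_le.mp h)
    exact absurd hlt (not_lt.mpr (hkey a ha))
  -- any nearest point of z equals the canonical point
  set t : ℝ := s / (s + r) with htdef
  have hsr : 0 < s + r := by linarith
  have ht0 : t ≠ 0 := by positivity
  have huniq : ∀ a, (a ∈ closure A ∧ dist z a = Metric.infDist z A) →
      a = t⁻¹ • (z - y) + y := by
    rintro a ⟨hacl, hda⟩
    rw [hzA] at hda
    have hya : dist y a = s + r := by
      refine le_antisymm ?_ ?_
      · calc dist y a ≤ dist y z + dist z a := dist_triangle y z a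
          _ = s + r := by rw [hda]
      · calc s + r ≤ Metric.infDist y A := hinf
          _ = Metric.infDist y (closure A) := (Metric.infDist_closure).symm
          _ ≤ dist y a := Metric.infDist_le_dist_of_mem hacl
    have h1 : dist y z = t * dist y a := by
      rw [hya, htdef]; field_simp; rfl
    have h2 : dist z a = (1 - t) * dist y a := by
      rw [hya, hda, htdef]; field_simp; ring
    have hz_eq : z = AffineMap.lineMap y a t :=
      eq_lineMap_of_dist_eq_mul_of_dist_eq_mul h1 h2
    rw [hz_eq, AffineMap.lineMap_apply_module]
    match_scalars <;> field_simp <;> ring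
  obtain ⟨a₀, ha₀cl, ha₀d⟩ := Metric.exists_mem_closure_infDist_eq_dist hA z
  exact ⟨a₀, ⟨ha₀cl, ha₀d.symm⟩, fun a ha =>
    (huniq a ha).trans (huniq a₀ ⟨ha₀cl, ha₀d.symm⟩).symm⟩
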